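/- Let δ ∈ (0,1). The measure μ_δ on 2Z with μ_δ(0) = 2δ/(1+δ) and μ_δ(2i) = (2δ(1-δ)/(1+δ)³)·((1-δ)/(1+δ))^{2(|i|-1)} for i ≠ 0 is stationary for the two-step transition kernel of the oscillating random walk with constant drift δ toward the origin. -/
import Mathlib



/-- One-step transition probability of the nearest-neighbor random walk on ℤ with
constant drift `δ` toward the origin: from 0 it steps to ±1 with probability 1/2;
from `i ≠ 0` it steps away from 0 with probability `(1-δ)/2` and toward 0 with
probability `(1+δ)/2`. -/
noncomputable def stepP (δ : ℝ) (i j : ℤ) : ℝ :=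
  if i = 0 then (if j = 1 ∨ j = -1 then 1 / 2 else 0)
  else if j = i + 1 then (if 0 < i then (1 - δ) / 2 else (1 + δ) / 2)
  else if j = i - 1 then (if 0 < i then (1 + δ) / 2 else (1 - δ) / 2)
  else 0

/-- `hitD δ n j` is the probability that the walk started at `j` first hits `0`
exactly at time `n`. -/
noncomputable def hitD (δ : ℝ) : ℕ → ℤ → ℝ
  | 0, j => if j = 0 then 1 else 0
  | n + 1, j =>
      if j = 0 then 0
      else stepP δ j (j + 1) * hitD δ n (j + 1) + stepP δ j (j - 1) * hitD δ n (j - 1)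

/-- The claimed stationary distribution of the two-step chain of the oscillating
random walk with drift `δ`: `muD δ i` is the mass of the even point `2*i`. -/
noncomputable def muD (δ : ℝ) (i : ℤ) : ℝ :=
  if i = 0 then 2 * δ / (1 + δ)
  else (2 * δ * (1 - δ) / (1 + δ) ^ 3) * ((1 - δ) / (1 + δ)) ^ (2 * (i.natAbs - 1))

lemma stepP_zero' (δ : ℝ) (k m : ℤ) (hk : k ≠ 0) (h1 : m ≠ k + 1) (h2 : m ≠ k - 1) :
    stepP δ k m = 0 := by
  simp only [stepP, if_neg hk, if_neg h1, if_neg h2]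

lemma stepP_pos_up (δ : ℝ) (k m : ℤ) (hk : 0 < k) (h : m = k + 1) :
    stepP δ k m = (1 - δ) / 2 := by
  simp only [stepP, if_neg (show k ≠ 0 by omega), if_pos h, if_pos hk]

lemma stepP_pos_down (δ : ℝ) (k m : ℤ) (hk : 0 < k) (h : m = k - 1) :
    stepP δ k m = (1 + δ) / 2 := by
  simp only [stepP, if_neg (show k ≠ 0 by omega), if_neg (show m ≠ k + 1 by omega),
    if_pos h, if_pos hk]

lemma stepP_neg_up (δ : ℝ) (k m : ℤ) (hk : k < 0) (h : m = k + 1) :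
    stepP δ k m = (1 + δ) / 2 := by
  simp only [stepP, if_neg (show k ≠ 0 by omega), if_pos h, if_neg (show ¬ 0 < k by omega)]

lemma stepP_neg_down (δ : ℝ) (k m : ℤ) (hk : k < 0) (h : m = k - 1) :
    stepP δ k m = (1 - δ) / 2 := by
  simp only [stepP, if_neg (show k ≠ 0 by omega), if_neg (show m ≠ k + 1 by omega),
    if_pos h, if_neg (show ¬ 0 < k by omega)]

set_option maxHeartbeats 1600000 in
/-- The measure `μ_δ` on `2ℤ` is stationary for the two-step transition kernel of the
oscillating random walk with constant drift `δ` toward the origin: for every even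
state `2*i`, `∑_j μ_δ(2j) P²(2j, 2i) = μ_δ(2i)`, where the two-step kernel is
`P²(2j,2i) = p(2j,2j+1) p(2j+1,2i) + p(2j,2j-1) p(2j-1,2i)`. -/
theorem muD_stationary (δ : ℝ) (hδ0 : 0 < δ) (hδ1 : δ < 1) (i : ℤ) :
    ∑' j : ℤ, muD δ j *
        (stepP δ (2 * j) (2 * j + 1) * stepP δ (2 * j + 1) (2 * i)
          + stepP δ (2 * j) (2 * j - 1) * stepP δ (2 * j - 1) (2 * i))
      = muD δ i := by
  have hd1 : (1 : ℝ) + δ ≠ 0 := by nlinarith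
  have hsupp : ∀ j ∉ ({i - 1, i, i + 1} : Finset ℤ),
      muD δ j *
        (stepP δ (2 * j) (2 * j + 1) * stepP δ (2 * j + 1) (2 * i)
          + stepP δ (2 * j) (2 * j - 1) * stepP δ (2 * j - 1) (2 * i)) = 0 := by
    intro j hj
    simp only [Finset.mem_insert, Finset.mem_singleton] at hj
    push_neg at hj
    rw [stepP_zero' δ (2 * j + 1) (2 * i) (by omega) (by omega) (by omega),
      stepP_zero' δ (2 * j - 1) (2 * i) (by omega) (by omega) (by omega)]
    ring
  rw [tsum_eq_sum hsupp,
    Finset.sum_insert (by simp only [Finset.mem_insert, Finset.mem_singleton]; omega),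
    Finset.sum_insert (by simp only [Finset.mem_singleton]; omega),
    Finset.sum_singleton]
  rcases lt_trichotomy i 0 with hi | rfl | hi
  · rcases eq_or_lt_of_le (show i ≤ -1 by omega) with rfl | hi2
    · norm_num [stepP, muD]
      field_simp
      ring
    · -- i ≤ -2
      set E := 2 * ((i + 1).natAbs - 1) with hE
      have e1 : muD δ (i - 1) = (2 * δ * (1 - δ) / (1 + δ) ^ 3) *
          (((1 - δ) / (1 + δ)) ^ E * ((1 - δ) / (1 + δ)) ^ 2 * ((1 - δ) / (1 + δ)) ^ 2) := by
        rw [muD, if_neg (show i - 1 ≠ 0 by omega),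
          show 2 * ((i - 1).natAbs - 1) = E + 2 + 2 by omega, pow_add, pow_add]
      have e2 : muD δ i = (2 * δ * (1 - δ) / (1 + δ) ^ 3) *
          (((1 - δ) / (1 + δ)) ^ E * ((1 - δ) / (1 + δ)) ^ 2) := by
        rw [muD, if_neg (show i ≠ 0 by omega),
          show 2 * (i.natAbs - 1) = E + 2 by omega, pow_add]
      have e3 : muD δ (i + 1) = (2 * δ * (1 - δ) / (1 + δ) ^ 3) *
          ((1 - δ) / (1 + δ)) ^ E := by
        rw [muD, if_neg (show i + 1 ≠ 0 by omega)]
      rw [e1, e2, e3,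
        stepP_neg_up δ (2 * (i - 1)) (2 * (i - 1) + 1) (by omega) (by omega),
        stepP_neg_up δ (2 * (i - 1) + 1) (2 * i) (by omega) (by omega),
        stepP_neg_down δ (2 * (i - 1)) (2 * (i - 1) - 1) (by omega) (by omega),
        stepP_zero' δ (2 * (i - 1) - 1) (2 * i) (by omega) (by omega) (by omega),
        stepP_neg_up δ (2 * i) (2 * i + 1) (by omega) (by omega),
        stepP_neg_down δ (2 * i + 1) (2 * i) (by omega) (by omega),
        stepP_neg_down δ (2 * i) (2 * i - 1) (by omega) (by omega),
        stepP_neg_up δ (2 * i - 1) (2 * i) (by omega) (by omega),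
        stepP_neg_up δ (2 * (i + 1)) (2 * (i + 1) + 1) (by omega) (by omega),
        stepP_zero' δ (2 * (i + 1) + 1) (2 * i) (by omega) (by omega) (by omega),
        stepP_neg_down δ (2 * (i + 1)) (2 * (i + 1) - 1) (by omega) (by omega),
        stepP_neg_down δ (2 * (i + 1) - 1) (2 * i) (by omega) (by omega)]
      field_simp
      ring
  · norm_num [stepP, muD]
    field_simp
    ring
  · rcases eq_or_lt_of_le (show 1 ≤ i by omega) with rfl | hi2
    · norm_num [stepP, muD]
      field_simp
      ring
    · -- 2 ≤ i
      set E := 2 * ((i - 1).natAbs - 1) with hE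
      have e1 : muD δ (i - 1) = (2 * δ * (1 - δ) / (1 + δ) ^ 3) *
          ((1 - δ) / (1 + δ)) ^ E := by
        rw [muD, if_neg (show i - 1 ≠ 0 by omega)]
      have e2 : muD δ i = (2 * δ * (1 - δ) / (1 + δ) ^ 3) *
          (((1 - δ) / (1 + δ)) ^ E * ((1 - δ) / (1 + δ)) ^ 2) := by
        rw [muD, if_neg (show i ≠ 0 by omega),
          show 2 * (i.natAbs - 1) = E + 2 by omega, pow_add]
      have e3 : muD δ (i + 1) = (2 * δ * (1 - δ) / (1 + δ) ^ 3) *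
          (((1 - δ) / (1 + δ)) ^ E * ((1 - δ) / (1 + δ)) ^ 2 * ((1 - δ) / (1 + δ)) ^ 2) := by
        rw [muD, if_neg (show i + 1 ≠ 0 by omega),
          show 2 * ((i + 1).natAbs - 1) = E + 2 + 2 by omega, pow_add, pow_add]
      rw [e1, e2, e3,
        stepP_pos_up δ (2 * (i - 1)) (2 * (i - 1) + 1) (by omega) (by omega),
        stepP_pos_up δ (2 * (i - 1) + 1) (2 * i) (by omega) (by omega),
        stepP_pos_down δ (2 * (i - 1)) (2 * (i - 1) - 1) (by omega) (by omega),
        stepP_zero' δ (2 * (i - 1) - 1) (2 * i) (by omega) (by omega) (by omega),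
        stepP_pos_up δ (2 * i) (2 * i + 1) (by omega) (by omega),
        stepP_pos_down δ (2 * i + 1) (2 * i) (by omega) (by omega),
        stepP_pos_down δ (2 * i) (2 * i - 1) (by omega) (by omega),
        stepP_pos_up δ (2 * i - 1) (2 * i) (by omega) (by omega),
        stepP_pos_up δ (2 * (i + 1)) (2 * (i + 1) + 1) (by omega) (by omega),
        stepP_zero' δ (2 * (i + 1) + 1) (2 * i) (by omega) (by omega) (by omega),
        stepP_pos_down δ (2 * (i + 1)) (2 * (i + 1) - 1) (by omega) (by omega),
        stepP_pos_down δ (2 * (i + 1) - 1) (2 * i) (by omega) (by omega)]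
      field_simp
      ring
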